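/- In the static placement model with C = 1: for every constant δ > 0 there exist constants p ∈ (0,1) and n₀ such that for all n ≥ n₀ the following holds. Condition on any realization of the infected nodes' cell choices in which at least δ·n cells of attractiveness 2 contain no infected node. Then each susceptible node independently remains uninfected in the round with probability at least p; consequently, if β > 0 is a constant and |U| ≥ n^β, then with probability at least 1 − exp(−Ω(n^β)) at least (p/2)·|U| susceptible nodes remain uninfected after the round. -/

import Mathlib

open scoped Classical
open Finset

/-- Probability that a single node chooses cell `v`: proportional to the
attractiveness `a v`. -/
noncomputable def cellProb {N : ℕ} (a : Fin N → ℕ) (v : Fin N) : ℝ :=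
  (a v : ℝ) / ∑ w : Fin N, (a w : ℝ)

/-- Probability of an event `E` about the (independent) cell choices of the
`n` nodes in one round. -/
noncomputable def roundProb (n : ℕ) {N : ℕ} (a : Fin N → ℕ)
    (E : Set (Fin n → Fin N)) : ℝ :=
  ∑ f : Fin n → Fin N, E.indicator (fun g => ∏ i : Fin n, cellProb a (g i)) f

/-- Expectation of a random variable `X` of the cell choices of the `n`
nodes in one round. -/
noncomputable def roundExp (n : ℕ) {N : ℕ} (a : Fin N → ℕ)
    (X : (Fin n → Fin N) → ℝ) : ℝ :=
  ∑ f : Fin n → Fin N, (∏ i : Fin n, cellProb a (f i)) * X f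

/-- The static placement model: `N = ⌈C·n⌉` cells, each with an integer
attractiveness in `[2, (C·n)^(1/α)]`, such that the number of cells of
attractiveness `d` is between `c₁·C·n/d^α` and `c₂·C·n/d^α`. -/
structure PlacementModel (C α c₁ c₂ : ℝ) (n N : ℕ) (a : Fin N → ℕ) : Prop where
  hC : 1 ≤ C
  hα : 2 < α
  hc₁ : 0 < c₁
  hc₁₂ : c₁ ≤ c₂
  hn : 0 < n
  hN : N = ⌈C * (n : ℝ)⌉₊
  ha_lb : ∀ v, 2 ≤ a v
  ha_ub : ∀ v, (a v : ℝ) ≤ (C * (n : ℝ)) ^ (1 / α)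
  hcount_lb : ∀ d : ℕ, 2 ≤ d → (d : ℝ) ≤ (C * (n : ℝ)) ^ (1 / α) →
    c₁ * C * (n : ℝ) / (d : ℝ) ^ α ≤
      ((Finset.univ.filter (fun v => a v = d)).card : ℝ)
  hcount_ub : ∀ d : ℕ, 2 ≤ d → (d : ℝ) ≤ (C * (n : ℝ)) ^ (1 / α) →
    ((Finset.univ.filter (fun v => a v = d)).card : ℝ) ≤
      c₂ * C * (n : ℝ) / (d : ℝ) ^ α


private lemma sum_prod_swap {n N : ℕ} (F : Fin n → Fin N → ℝ) :
    ∑ f : Fin n → Fin N, ∏ i, F i (f i) = ∏ i, ∑ v, F i v := by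
  rw [Finset.prod_univ_sum, Fintype.piFinset_univ]

set_option maxHeartbeats 1000000 in
/-- In the static placement model with `C = 1`: for every constant `δ > 0`
(and every constant `β > 0`) there are constants `p ∈ (0,1)`, `c > 0` and `n₀`
such that for all `n ≥ n₀` the following holds.  Condition on any realization
`fI` of the infected nodes' cell choices in which at least `δ·n` cells of
attractiveness `2` contain no infected node.  Then each susceptible node
independently remains uninfected in the round with probability at least `p`;
consequently, if `|U| ≥ n^β`, then with probability at least
`1 − exp(−Ω(n^β))` at least `(p/2)·|U|` susceptible nodes remain uninfected
after the round. -/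
theorem survive_round (α c₁ c₂ : ℝ) (hα : 2 < α) (hc₁ : 0 < c₁)
    (hc₁₂ : c₁ ≤ c₂) (δ β : ℝ) (hδ : 0 < δ) (hβ : 0 < β) :
    ∃ p : ℝ, 0 < p ∧ p < 1 ∧ ∃ c : ℝ, 0 < c ∧ ∃ n₀ : ℕ, ∀ n : ℕ, n₀ ≤ n →
      ∀ (N : ℕ) (a : Fin N → ℕ), PlacementModel 1 α c₁ c₂ n N a →
        ∀ I U R : Finset (Fin n),
          Disjoint I U → Disjoint I R → Disjoint U R → I ∪ U ∪ R = Finset.univ →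
          ∀ fI : Fin n → Fin N,
            δ * (n : ℝ) ≤ ((Finset.univ.filter (fun v : Fin N =>
                a v = 2 ∧ ∀ i ∈ I, fI i ≠ v)).card : ℝ) →
            (∀ u ∈ U,
              p ≤ ∑ v ∈ Finset.univ.filter (fun v : Fin N => ∀ i ∈ I, fI i ≠ v),
                    cellProb a v) ∧
            ((n : ℝ) ^ β ≤ (U.card : ℝ) →
              1 - Real.exp (-c * (n : ℝ) ^ β) ≤
                roundProb n a {f |
                  (p / 2) * (U.card : ℝ) ≤
                    ((U.filter (fun u => ∀ i ∈ I, fI i ≠ f u)).card : ℝ)}) := by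
  classical
  have hc₂ : 0 < c₂ := lt_of_lt_of_le hc₁ hc₁₂
  have hsum : Summable (fun d : ℕ => (d:ℝ) ^ (1 - α)) :=
    Real.summable_nat_rpow.mpr (by linarith)
  set S : ℝ := ∑' d : ℕ, (d:ℝ) ^ (1 - α) with hSdef
  have hS1 : (1:ℝ) ≤ S := by
    have h1 : ∑ d ∈ ({1} : Finset ℕ), (d:ℝ) ^ (1 - α) = 1 := by
      simp [Real.one_rpow]
    calc (1:ℝ) = ∑ d ∈ ({1} : Finset ℕ), (d:ℝ) ^ (1 - α) := h1.symm
      _ ≤ S := Summable.sum_le_tsum _ (fun i _ => Real.rpow_nonneg (Nat.cast_nonneg i) _) hsum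
  set K : ℝ := c₂ * S with hKdef
  have hK : 0 < K := mul_pos hc₂ (by linarith)
  set p : ℝ := min (2 * δ / K) (1/2) with hpdef
  have hp0 : 0 < p := lt_min (by positivity) (by norm_num)
  have hphalf : p ≤ 1/2 := min_le_right _ _
  have hp1 : p < 1 := lt_of_le_of_lt hphalf (by norm_num)
  have hexp1 : Real.exp (-1) < 1/2 := by
    rw [Real.exp_neg, inv_lt_comm₀ (Real.exp_pos 1) (by norm_num)]
    have := Real.exp_one_gt_d9
    norm_num at this ⊢; linarith
  have hexp0 : 0 ≤ Real.exp (-1) := (Real.exp_pos _).le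
  set c : ℝ := (1/2 - Real.exp (-1)) * p with hcdef
  have hc : 0 < c := mul_pos (by linarith) hp0
  refine ⟨p, hp0, hp1, c, hc, 1, ?_⟩
  intro n hn1 N a pm I U R hIU hIR hUR hpart fI hfree
  obtain ⟨_, _, _, _, hnpos, hN, ha_lb, ha_ub, hcount_lb, hcount_ub⟩ := pm
  have hNn : N = n := by rw [hN]; simp
  set T : ℝ := ∑ w : Fin N, (a w : ℝ) with hTdef
  have hT_lb : 2 * (n:ℝ) ≤ T := by
    have : ∑ w : Fin N, (2:ℝ) ≤ T :=
      Finset.sum_le_sum (fun w _ => by exact_mod_cast ha_lb w)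
    simpa [hNn, mul_comm] using this
  have hT0 : 0 < T := lt_of_lt_of_le (by positivity) hT_lb
  -- upper bound on T
  have hT_ub : T ≤ K * n := by
    have hcomp : T = ∑ d ∈ Finset.univ.image a,
        ((Finset.univ.filter (fun v => a v = d)).card : ℝ) * (d:ℝ) := by
      rw [hTdef]
      rw [Finset.sum_comp (fun d : ℕ => (d:ℝ)) a]
      simp [nsmul_eq_mul]
    rw [hcomp]
    have hterm : ∀ d ∈ Finset.univ.image a,
        ((Finset.univ.filter (fun v => a v = d)).card : ℝ) * (d:ℝ)
          ≤ c₂ * (n:ℝ) * (d:ℝ) ^ (1 - α) := by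
      intro d hd
      obtain ⟨v, -, hv⟩ := Finset.mem_image.mp hd
      have hd2 : 2 ≤ d := hv ▸ ha_lb v
      have hdub : (d:ℝ) ≤ (1 * (n:ℝ)) ^ (1 / α) := hv ▸ ha_ub v
      have hdpos : (0:ℝ) < (d:ℝ) := by exact_mod_cast Nat.lt_of_lt_of_le (by norm_num) hd2
      have hcount := hcount_ub d hd2 hdub
      have hpow : (0:ℝ) < (d:ℝ) ^ α := Real.rpow_pos_of_pos hdpos α
      calc ((Finset.univ.filter (fun v => a v = d)).card : ℝ) * (d:ℝ)
          ≤ (c₂ * 1 * (n:ℝ) / (d:ℝ) ^ α) * (d:ℝ) :=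
            mul_le_mul_of_nonneg_right hcount hdpos.le
        _ = c₂ * (n:ℝ) * ((d:ℝ) ^ (1:ℝ) / (d:ℝ) ^ α) := by
            rw [Real.rpow_one]; ring
        _ = c₂ * (n:ℝ) * (d:ℝ) ^ (1 - α) := by
            rw [← Real.rpow_sub hdpos]
    calc ∑ d ∈ Finset.univ.image a,
          ((Finset.univ.filter (fun v => a v = d)).card : ℝ) * (d:ℝ)
        ≤ ∑ d ∈ Finset.univ.image a, c₂ * (n:ℝ) * (d:ℝ) ^ (1 - α) :=
          Finset.sum_le_sum hterm
      _ = c₂ * (n:ℝ) * ∑ d ∈ Finset.univ.image a, (d:ℝ) ^ (1 - α) := by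
          rw [Finset.mul_sum]
      _ ≤ c₂ * (n:ℝ) * S := by
          apply mul_le_mul_of_nonneg_left
            (Summable.sum_le_tsum _ (fun i _ => Real.rpow_nonneg (Nat.cast_nonneg i) _) hsum)
          positivity
      _ = K * n := by ring
  have hcell_nonneg : ∀ v, 0 ≤ cellProb a v := fun v =>
    div_nonneg (Nat.cast_nonneg _) hT0.le
  have hcell_sum : ∑ v : Fin N, cellProb a v = 1 := by
    unfold cellProb
    rw [← Finset.sum_div, div_self hT0.ne']
  set q : ℝ := ∑ v ∈ Finset.univ.filter (fun v : Fin N => ∀ i ∈ I, fI i ≠ v),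
      cellProb a v with hqdef
  have hq_le1 : q ≤ 1 := by
    rw [hqdef, ← hcell_sum]
    exact Finset.sum_le_sum_of_subset_of_nonneg (Finset.filter_subset _ _)
      (fun v _ _ => hcell_nonneg v)
  have hq_ge : p ≤ q := by
    have hsub : Finset.univ.filter (fun v : Fin N => a v = 2 ∧ ∀ i ∈ I, fI i ≠ v)
        ⊆ Finset.univ.filter (fun v : Fin N => ∀ i ∈ I, fI i ≠ v) := by
      intro v hv
      simp only [Finset.mem_filter] at hv ⊢
      exact ⟨hv.1, hv.2.2⟩
    have h1 : ∑ v ∈ Finset.univ.filter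
          (fun v : Fin N => a v = 2 ∧ ∀ i ∈ I, fI i ≠ v), cellProb a v ≤ q :=
      Finset.sum_le_sum_of_subset_of_nonneg hsub (fun v _ _ => hcell_nonneg v)
    have h2 : ∑ v ∈ Finset.univ.filter
          (fun v : Fin N => a v = 2 ∧ ∀ i ∈ I, fI i ≠ v), cellProb a v
        = ((Finset.univ.filter (fun v : Fin N =>
            a v = 2 ∧ ∀ i ∈ I, fI i ≠ v)).card : ℝ) * (2 / T) := by
      have hval : ∀ v ∈ Finset.univ.filter
          (fun v : Fin N => a v = 2 ∧ ∀ i ∈ I, fI i ≠ v), cellProb a v = 2 / T := by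
        intro v hv
        have h := (Finset.mem_filter.mp hv).2.1
        unfold cellProb
        rw [h]
        norm_num
        rfl
      rw [Finset.sum_congr rfl hval, Finset.sum_const, nsmul_eq_mul]
    have h3 : δ * (n:ℝ) * (2 / T) ≤ ((Finset.univ.filter (fun v : Fin N =>
          a v = 2 ∧ ∀ i ∈ I, fI i ≠ v)).card : ℝ) * (2 / T) :=
      mul_le_mul_of_nonneg_right hfree (by positivity)
    have h4 : 2 * δ / K ≤ δ * (n:ℝ) * (2 / T) := by
      have hn0 : (0:ℝ) < n := by exact_mod_cast hnpos
      have heq : δ * (n:ℝ) * (2 / T) = 2 * δ * n / T := by ring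
      rw [heq, div_le_div_iff₀ hK hT0]
      nlinarith [hT_ub, hδ, hn0]

    calc p ≤ 2 * δ / K := min_le_left _ _
      _ ≤ δ * (n:ℝ) * (2 / T) := h4
      _ ≤ _ := h3
      _ = _ := h2.symm
      _ ≤ q := h1
  refine ⟨fun u _ => hq_ge, ?_⟩
  -- concentration part
  intro hU
  set m : ℕ := U.card with hmdef
  set A : ℝ := p / 2 * (m:ℝ) with hAdef
  set E : Set (Fin n → Fin N) := {f |
      A ≤ ((U.filter (fun u => ∀ i ∈ I, fI i ≠ f u)).card : ℝ)} with hEdef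
  set h : Fin N → ℝ := fun v => if (∀ i ∈ I, fI i ≠ v) then Real.exp (-1) else 1
    with hhdef
  set G : Fin n → Fin N → ℝ := fun i v => cellProb a v * (if i ∈ U then h v else 1)
    with hGdef
  set w : (Fin n → Fin N) → ℝ := fun f => ∏ i, cellProb a (f i) with hwdef
  have hw_nonneg : ∀ f, 0 ≤ w f := fun f =>
    Finset.prod_nonneg (fun i _ => hcell_nonneg _)
  have hw_sum : ∑ f : Fin n → Fin N, w f = 1 := by
    rw [hwdef]
    rw [sum_prod_swap (fun _ v => cellProb a v)]
    simp [hcell_sum]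
  -- the exponential count identity
  have hcount : ∀ f : Fin n → Fin N, ∏ u ∈ U, h (f u) =
      Real.exp (-(((U.filter (fun u => ∀ i ∈ I, fI i ≠ f u)).card : ℝ))) := by
    intro f
    rw [hhdef]
    rw [Finset.prod_ite (fun _ => Real.exp (-1)) (fun _ => (1:ℝ))]
    rw [Finset.prod_const, Finset.prod_const, one_pow, mul_one]
    rw [← Real.exp_nat_mul]
    congr 1
    push_cast
    ring
  -- factorized expectation
  have hfact : ∑ f : Fin n → Fin N, ∏ i, G i (f i) = ∏ i, ∑ v, G i v :=
    sum_prod_swap G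
  have hGw : ∀ f : Fin n → Fin N, ∏ i, G i (f i) =
      w f * Real.exp (-(((U.filter (fun u => ∀ i ∈ I, fI i ≠ f u)).card : ℝ))) := by
    intro f
    rw [hGdef, ← hcount f]
    rw [Finset.prod_mul_distrib]
    congr 1
    rw [← Finset.prod_filter]
    congr 1
    simp
  -- value of factors
  have hfac_notU : ∀ i, i ∉ U → ∑ v, G i v = 1 := by
    intro i hi
    simp only [hGdef, if_neg hi, mul_one]
    exact hcell_sum
  have hfac_U : ∀ i, i ∈ U → ∑ v, G i v = 1 - (1 - Real.exp (-1)) * q := by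
    intro i hi
    simp only [hGdef, if_pos hi, hhdef]
    have : ∑ v : Fin N, cellProb a v * (if (∀ j ∈ I, fI j ≠ v) then Real.exp (-1) else 1)
        = (∑ v ∈ Finset.univ.filter (fun v : Fin N => ∀ j ∈ I, fI j ≠ v),
            cellProb a v * Real.exp (-1))
          + ∑ v ∈ Finset.univ.filter (fun v : Fin N => ¬ (∀ j ∈ I, fI j ≠ v)),
            cellProb a v * 1 := by
      rw [← Finset.sum_filter_add_sum_filter_not Finset.univ
        (fun v : Fin N => ∀ j ∈ I, fI j ≠ v)]
      congr 1
      · exact Finset.sum_congr rfl (fun v hv => by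
          rw [if_pos (Finset.mem_filter.mp hv).2])
      · exact Finset.sum_congr rfl (fun v hv => by
          rw [if_neg (Finset.mem_filter.mp hv).2])
    rw [this]
    have hnot : ∑ v ∈ Finset.univ.filter (fun v : Fin N => ¬ (∀ j ∈ I, fI j ≠ v)),
        cellProb a v = 1 - q := by
      have := Finset.sum_filter_add_sum_filter_not Finset.univ
        (fun v : Fin N => ∀ j ∈ I, fI j ≠ v) (cellProb a)
      rw [hcell_sum] at this  -- q + rest = 1
      linarith [this]
    simp only [mul_one]
    rw [hnot, ← Finset.sum_mul]
    rw [← hqdef]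
    ring
  set r : ℝ := 1 - (1 - Real.exp (-1)) * p with hrdef
  have hr_nonneg : 0 ≤ r := by
    have : (1 - Real.exp (-1)) * p ≤ 1 * (1/2) :=
      mul_le_mul (by linarith) hphalf hp0.le (by norm_num)
    rw [hrdef]; linarith
  have hfacU_le : ∀ i ∈ U, ∑ v, G i v ≤ r := by
    intro i hi
    rw [hfac_U i hi, hrdef]
    have h1 : 0 ≤ 1 - Real.exp (-1) := by linarith
    nlinarith [hq_ge]
  have hfacU_nonneg : ∀ i ∈ U, 0 ≤ ∑ v, G i v := by
    intro i hi
    rw [hfac_U i hi]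
    nlinarith [hq_le1, hexp0, hq_ge, hp0]
  have hprod_le : ∏ i, ∑ v, G i v ≤ r ^ m := by
    have h1 : ∏ i, ∑ v, G i v = ∏ i ∈ U, ∑ v, G i v :=
      (Finset.prod_subset (Finset.subset_univ U)
        (fun i _ hi => hfac_notU i hi)).symm
    rw [h1, hmdef, ← Finset.prod_const]
    exact Finset.prod_le_prod hfacU_nonneg hfacU_le
  -- pointwise bound on indicator
  have hpoint : ∀ f : Fin n → Fin N,
      w f - Real.exp A * (∏ i, G i (f i)) ≤
        E.indicator (fun g => ∏ i : Fin n, cellProb a (g i)) f := by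
    intro f
    rw [hGw f]
    by_cases hf : f ∈ E
    · rw [Set.indicator_of_mem hf]
      have : 0 ≤ Real.exp A * (w f * Real.exp (-(((U.filter
          (fun u => ∀ i ∈ I, fI i ≠ f u)).card : ℝ)))) := by
        have := hw_nonneg f; positivity
      show w f - _ ≤ w f
      linarith
    · rw [Set.indicator_of_notMem hf]
      have hlt : ((U.filter (fun u => ∀ i ∈ I, fI i ≠ f u)).card : ℝ) < A := by
        by_contra hcon
        exact hf (by rw [hEdef]; exact Set.mem_setOf_eq ▸ le_of_not_gt hcon)
      have hge1 : (1:ℝ) ≤ Real.exp A * Real.exp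
          (-(((U.filter (fun u => ∀ i ∈ I, fI i ≠ f u)).card : ℝ))) := by
        rw [← Real.exp_add]
        rw [show (1:ℝ) = Real.exp 0 from (Real.exp_zero).symm]
        exact Real.exp_le_exp.mpr (by linarith)
      have := hw_nonneg f
      nlinarith
  -- put it together
  have hmain : 1 - Real.exp A * r ^ m ≤ roundProb n a E := by
    have hsum_le : ∑ f : Fin n → Fin N, (w f - Real.exp A * (∏ i, G i (f i)))
        ≤ roundProb n a E := Finset.sum_le_sum (fun f _ => hpoint f)
    have heq : ∑ f : Fin n → Fin N, (w f - Real.exp A * (∏ i, G i (f i)))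
        = 1 - Real.exp A * ∏ i, ∑ v, G i v := by
      rw [Finset.sum_sub_distrib, hw_sum, ← Finset.mul_sum, hfact]
    rw [heq] at hsum_le
    have : Real.exp A * ∏ i, ∑ v, G i v ≤ Real.exp A * r ^ m :=
      mul_le_mul_of_nonneg_left hprod_le (Real.exp_pos _).le
    linarith
  -- final numeric bound
  have hrm : r ^ m ≤ Real.exp (-(1 - Real.exp (-1)) * p * m) := by
    have h1 : r ≤ Real.exp (-(1 - Real.exp (-1)) * p) := by
      have := Real.add_one_le_exp (-(1 - Real.exp (-1)) * p)
      rw [hrdef]; linarith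
    calc r ^ m ≤ (Real.exp (-(1 - Real.exp (-1)) * p)) ^ m :=
          pow_le_pow_left₀ hr_nonneg h1 m
      _ = Real.exp (-(1 - Real.exp (-1)) * p * m) := by
          rw [← Real.exp_nat_mul]; ring_nf
  have hfinal : Real.exp A * r ^ m ≤ Real.exp (-c * (n:ℝ) ^ β) := by
    have h1 : Real.exp A * r ^ m ≤ Real.exp A *
        Real.exp (-(1 - Real.exp (-1)) * p * m) :=
      mul_le_mul_of_nonneg_left hrm (Real.exp_pos _).le
    rw [← Real.exp_add] at h1
    have h2 : A + -(1 - Real.exp (-1)) * p * m = -c * m := by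
      rw [hAdef, hcdef]; ring
    rw [h2] at h1
    have h3 : Real.exp (-c * m) ≤ Real.exp (-c * (n:ℝ) ^ β) := by
      apply Real.exp_le_exp.mpr
      nlinarith [hU, hc]
    linarith
  calc 1 - Real.exp (-c * (n:ℝ) ^ β) ≤ 1 - Real.exp A * r ^ m := by linarith
    _ ≤ roundProb n a E := hmain
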